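/- arXiv:0909.3378 — 4 statements merged into one kernel-verified Lean document; each statement's English description precedes it below -/
import Mathlib

section
/- Let p, q be real numbers with q ≠ 0, T > 0, and suppose (pT, qT) ∈ ℤ² with pT and qT coprime integers (so there exist integers r, s with pT·r − qT·s = 1). Let f : ℝ² → ℝ be ℤ²-periodic (i.e., f(x+m, y+n) = f(x,y) for all integers m,n). Define F(λ) = (1/T)∫₀ᵀ f(pt, qt + λ) dt. Then F is (1/(pT))-periodic: F(λ + 1/(pT)) = F(λ) for all λ ∈ ℝ. -/
open intervalIntegral

theorem stmt_0 (p q T : ℝ) (hT : 0 < T) (hq : q ≠ 0) (hp : p ≠ 0)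
    (a b r s : ℤ) (ha : p * T = a) (hb : q * T = b)
    (hbezout : (a : ℝ) * r - (b : ℝ) * s = 1)
    (f : ℝ × ℝ → ℝ) (hf : Continuous f)
    (hper : ∀ (x y : ℝ) (m n : ℤ), f (x + m, y + n) = f (x, y))
    (F : ℝ → ℝ)
    (hF : ∀ l, F l = (1 / T) * ∫ t in (0:ℝ)..T, f (p * t, q * t + l)) :
    ∀ l : ℝ, F (l + 1 / (p * T)) = F l := by
  intro l
  have ha0 : (a : ℝ) ≠ 0 := by rw [← ha]; exact mul_ne_zero hp hT.ne'
  set c : ℝ := s * T / a with hc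
  have hpc : p * c = (s : ℝ) := by
    rw [hc]; field_simp; rw [← ha]; ring
  have hqc : q * c + 1 / (p * T) = (r : ℝ) := by
    rw [hc, ha]
    field_simp
    linear_combination (s:ℝ) * hb - hbezout
  have hTper : ∀ μ : ℝ, Function.Periodic (fun t => f (p * t, q * t + μ)) T := by
    intro μ t
    have e1 : p * (t + T) = p * t + (a : ℝ) := by rw [mul_add, ha]
    have e2 : q * (t + T) + μ = (q * t + μ) + (b : ℝ) := by rw [mul_add, hb]; ring
    simp only [e1, e2, hper]
  have key : ∀ t : ℝ, f (p * (t + c), q * (t + c) + (l + 1 / (p * T)))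
      = f (p * t, q * t + l) := by
    intro t
    have e1 : p * (t + c) = p * t + (s : ℝ) := by rw [mul_add, hpc]
    have e2 : q * (t + c) + (l + 1 / (p * T)) = (q * t + l) + (r : ℝ) := by
      rw [mul_add]; linarith [hqc]
    rw [e1, e2, hper]
  rw [hF, hF]
  congr 1
  calc (∫ t in (0:ℝ)..T, f (p * t, q * t + (l + 1 / (p * T))))
      = ∫ t in c..(c + T), f (p * t, q * t + (l + 1 / (p * T))) := by
        simpa using (hTper (l + 1 / (p * T))).intervalIntegral_add_eq 0 c
    _ = ∫ t in (0:ℝ)..T, f (p * (t + c), q * (t + c) + (l + 1 / (p * T))) := by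
        rw [intervalIntegral.integral_comp_add_right
          (fun t => f (p * t, q * t + (l + 1 / (p * T)))) c]
        norm_num [add_comm]
    _ = ∫ t in (0:ℝ)..T, f (p * t, q * t + l) := by
        simp only [key]
end

section
/- Let F : ℝ → ℝ be a C⁴ function that is δ-periodic (δ > 0, δ ≤ 1), and suppose ∫₀¹ F(λ) dλ − F(0) ≥ C·δ⁴ for some C > 0. Then there exists λ ∈ ℝ with |F⁽⁴⁾(λ)| ≥ C. -/
open Set intervalIntegral

lemma periodic_deriv'' {f : ℝ → ℝ} {δ : ℝ} (hp : Function.Periodic f δ) :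
    Function.Periodic (deriv f) δ := by
  intro x
  have h1 : deriv (fun y => f (y + δ)) x = deriv f (x + δ) := deriv_comp_add_const f δ x
  have h2 : (fun y => f (y + δ)) = f := funext fun y => hp y
  rw [h2] at h1
  exact h1.symm

lemma step_lemma {h : ℝ → ℝ} {δ K : ℝ} (hδ : 0 < δ) (hK : 0 ≤ K)
    (hh : Differentiable ℝ h) (hg : Differentiable ℝ (deriv h))
    (hp : Function.Periodic h δ) {x : ℝ} (hx : K ≤ |deriv h x|) :
    ∃ y, K / δ ≤ |deriv (deriv h) y| := by
  obtain ⟨w, hw, hw0⟩ := exists_deriv_eq_zero (f := h) (by linarith : x < x + δ)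
    hh.continuous.continuousOn (hp x).symm
  have hxw : x < w := hw.1
  obtain ⟨c, _, hc⟩ := exists_deriv_eq_slope (deriv h) hxw hg.continuous.continuousOn
    (fun y _ => (hg y).differentiableWithinAt)
  refine ⟨c, ?_⟩
  rw [hc, hw0, zero_sub, abs_div, abs_neg, abs_of_pos (by linarith : (0:ℝ) < w - x)]
  rw [div_le_div_iff₀ hδ (by linarith)]
  nlinarith [abs_nonneg (deriv h x), hw.2]

theorem stmt_8 (F : ℝ → ℝ) (δ C : ℝ) (hδ : 0 < δ) (hδ1 : δ ≤ 1) (hC : 0 < C)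
    (hF : ContDiff ℝ 4 F) (hper : ∀ l, F (l + δ) = F l)
    (hosc : (∫ l in (0:ℝ)..1, F l) - F 0 ≥ C * δ ^ 4) :
    ∃ l : ℝ, |iteratedDeriv 4 F l| ≥ C := by
  have hp0 : Function.Periodic F δ := hper
  -- differentiability of iterated derivatives
  have h4 : ContDiff ℝ ((3:ℕ∞) + 1) F := by exact_mod_cast hF
  rw [contDiff_succ_iff_deriv] at h4
  have hd0 : Differentiable ℝ F := h4.1
  have h3 : ContDiff ℝ ((2:ℕ∞) + 1) (deriv F) := by exact_mod_cast h4.2.2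
  rw [contDiff_succ_iff_deriv] at h3
  have hd1 : Differentiable ℝ (deriv F) := h3.1
  have h2 : ContDiff ℝ ((1:ℕ∞) + 1) (deriv (deriv F)) := by exact_mod_cast h3.2.2
  rw [contDiff_succ_iff_deriv] at h2
  have hd2 : Differentiable ℝ (deriv (deriv F)) := h2.1
  have h1 : ContDiff ℝ ((0:ℕ∞) + 1) (deriv (deriv (deriv F))) := by exact_mod_cast h2.2.2
  rw [contDiff_succ_iff_deriv] at h1
  have hd3 : Differentiable ℝ (deriv (deriv (deriv F))) := h1.1
  have hp1 : Function.Periodic (deriv F) δ := periodic_deriv'' hp0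
  have hp2 : Function.Periodic (deriv (deriv F)) δ := periodic_deriv'' hp1
  -- find a point where F exceeds F 0 by C δ^4
  obtain ⟨a, ha, hmax⟩ := isCompact_Icc.exists_isMaxOn (Set.nonempty_Icc.2 zero_le_one)
    (hd0.continuous.continuousOn (s := Icc (0:ℝ) 1))
  have hint : (∫ l in (0:ℝ)..1, F l) ≤ F a := by
    calc (∫ l in (0:ℝ)..1, F l) ≤ ∫ _ in (0:ℝ)..1, F a :=
          integral_mono_on zero_le_one (hd0.continuous.intervalIntegrable 0 1)
            (intervalIntegrable_const) (fun x hx => hmax hx)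
      _ = F a := by simp
  have hFa : F a - F 0 ≥ C * δ ^ 4 := by linarith
  -- reduce a mod δ
  obtain ⟨b, hb, hab⟩ := hp0.exists_mem_Ico₀ hδ a
  rw [hab] at hFa
  have hb0 : 0 < b := by
    rcases lt_or_eq_of_le hb.1 with h | h
    · exact h
    · exfalso; rw [← h] at hFa
      nlinarith [mul_pos hC (pow_pos hδ 4)]
  -- MVT: get |F'| ≥ C δ^3
  obtain ⟨x1, _, hx1⟩ := exists_deriv_eq_slope F hb0 hd0.continuous.continuousOn
    (fun y _ => (hd0 y).differentiableWithinAt)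
  have hs1 : C * δ ^ 3 ≤ |deriv F x1| := by
    rw [hx1, sub_zero]
    have hb2 : b < δ := hb.2
    have h : C * δ ^ 3 ≤ (F b - F 0) / b := by
      rw [le_div_iff₀ hb0]
      nlinarith [mul_le_mul_of_nonneg_left hb.2.le (by positivity : (0:ℝ) ≤ C * δ ^ 3)]
    calc C * δ ^ 3 ≤ (F b - F 0) / b := h
      _ ≤ |(F b - F 0) / b| := le_abs_self _
  obtain ⟨x2, hs2⟩ := step_lemma hδ (by positivity) hd0 hd1 hp0 hs1
  obtain ⟨x3, hs3⟩ := step_lemma hδ (by positivity) hd1 hd2 hp1 hs2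
  obtain ⟨x4, hs4⟩ := step_lemma hδ (by positivity) hd2 hd3 hp2 hs3
  refine ⟨x4, ?_⟩
  have hiter : iteratedDeriv 4 F = deriv (deriv (deriv (deriv F))) := by
    rw [show (4:ℕ) = 0+1+1+1+1 from rfl]
    simp only [iteratedDeriv_succ, iteratedDeriv_zero]
  rw [hiter]
  have : C * δ ^ 3 / δ / δ / δ = C := by
    rw [div_div, div_div, div_eq_iff (by positivity : δ * (δ * δ) ≠ 0)]
    ring
  rw [this] at hs4
  exact hs4
end

section
/- Main combined estimate: Let p₀, q₀ satisfy p₀² + q₀² = 1 with p₀/q₀ a quadratic irrational admitting approximation constant C₀ > 0 (|p₀/q₀ − a/b| ≥ C₀/b² for all integers a, b≠0). Let f : ℝ² → ℝ be C⁴ and ℤ²-periodic, and let p, q, T (T > 0, pT, qT coprime nonzero integers). Define F(λ) = (1/T)∫₀ᵀ f(pt, qt+λ) dt and suppose ∫₀¹ F(λ)dλ − F(0) ≥ (1/2)(p−p₀)² + (1/2)(q−q₀)². Then there is a constant C > 0 depending only on p₀, q₀, C₀ (not on f, p, q, T) and some λ ∈ ℝ such that |(1/T)∫₀ᵀ ∂⁴f/∂y⁴(pt,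 qt+λ) dt| ≥ C; in particular the C⁴-norm of f is at least C. -/
open Function Set intervalIntegral MeasureTheory

lemma iterFDeriv_translate {g : ℝ × ℝ → ℝ} (hg : ContDiff ℝ 4 g) (c : ℝ × ℝ) :
    ∀ m : ℕ, m ≤ 4 → ∀ x, iteratedFDeriv ℝ m (fun w => g (w + c)) x
      = iteratedFDeriv ℝ m g (x + c) := by
  intro m
  induction m with
  | zero => intro _ x; ext v; simp
  | succ i ih =>
    intro him x
    have hi : i ≤ 4 := Nat.le_of_succ_le him
    have hi4 : (i : WithTop ℕ∞) < 4 := by exact_mod_cast Nat.lt_of_succ_le him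
    ext v
    rw [iteratedFDeriv_succ_apply_left, iteratedFDeriv_succ_apply_left]
    have h2 : iteratedFDeriv ℝ i (fun w => g (w + c))
        = fun w => iteratedFDeriv ℝ i g (w + c) := funext (ih hi)
    have hdiff : DifferentiableAt ℝ (iteratedFDeriv ℝ i g) (x + c) :=
      (hg.differentiable_iteratedFDeriv hi4).differentiableAt
    have h1 : HasFDerivAt (fun w => iteratedFDeriv ℝ i g (w + c))
        (fderiv ℝ (iteratedFDeriv ℝ i g) (x + c)) x := by
      have := hdiff.hasFDerivAt.comp x ((hasFDerivAt_id x).add_const c)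
      simpa [Function.comp_def] using this
    rw [h2, h1.fderiv]

lemma slice_eq {f : ℝ × ℝ → ℝ} (hf : ContDiff ℝ 4 f) {m : ℕ} (hm : m ≤ 4) (x z : ℝ) :
    iteratedDeriv m (fun y => f (x, y)) z
      = iteratedFDeriv ℝ m f (x, z) (fun _ => ((0 : ℝ), (1 : ℝ))) := by
  have hτ : ContDiff ℝ 4 (fun w : ℝ × ℝ => f (w + (x, 0))) :=
    hf.comp (contDiff_id.add contDiff_const)
  have h1 : (fun y : ℝ => f (x, y))
      = (fun w : ℝ × ℝ => f (w + (x, 0))) ∘ (ContinuousLinearMap.inr ℝ ℝ ℝ) := by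
    ext y; simp [Prod.ext_iff]
  have hm' : (m : WithTop ℕ∞) ≤ 4 := by exact_mod_cast hm
  rw [h1, iteratedDeriv_eq_iteratedFDeriv,
    ContinuousLinearMap.iteratedFDeriv_comp_right _ hτ _ hm']
  have h3 := iterFDeriv_translate hf (x, 0) m hm ((ContinuousLinearMap.inr ℝ ℝ ℝ) z)
  simp only [ContinuousMultilinearMap.compContinuousLinearMap_apply, h3]
  norm_num

lemma phi_shift {f : ℝ × ℝ → ℝ} (hf : ContDiff ℝ 4 f)
    (hper : ∀ (x y : ℝ) (m n : ℤ), f (x + m, y + n) = f (x, y)) {m : ℕ} (hm : m ≤ 4)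
    (w : ℝ × ℝ) (mi ni : ℤ) :
    iteratedFDeriv ℝ m f (w + ((mi : ℝ), (ni : ℝ))) = iteratedFDeriv ℝ m f w := by
  have hfc : (fun w' : ℝ × ℝ => f (w' + ((mi : ℝ), (ni : ℝ)))) = f := by
    funext w'
    have := hper w'.1 w'.2 mi ni
    exact this
  rw [← iterFDeriv_translate hf _ m hm w, hfc]

lemma phi_bound {f : ℝ × ℝ → ℝ} (hf : ContDiff ℝ 4 f)
    (hper : ∀ (x y : ℝ) (m n : ℤ), f (x + m, y + n) = f (x, y)) {m : ℕ} (hm : m ≤ 4) :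
    ∃ B : ℝ, ∀ w : ℝ × ℝ, |iteratedFDeriv ℝ m f w (fun _ => ((0 : ℝ), (1 : ℝ)))| ≤ B := by
  have hm' : (m : WithTop ℕ∞) ≤ 4 := by exact_mod_cast hm
  have hN : Continuous fun w : ℝ × ℝ => ‖iteratedFDeriv ℝ m f w‖ :=
    (hf.continuous_iteratedFDeriv hm').norm
  obtain ⟨B, hB⟩ := (isCompact_Icc (a := ((0 : ℝ), (0 : ℝ))) (b := (1, 1))).exists_bound_of_continuousOn
    hN.continuousOn
  refine ⟨B, fun w => ?_⟩
  have hu : w + (((-⌊w.1⌋ : ℤ) : ℝ), ((-⌊w.2⌋ : ℤ) : ℝ)) = (Int.fract w.1, Int.fract w.2) := by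
    have e1 : (w + (((-⌊w.1⌋ : ℤ) : ℝ), ((-⌊w.2⌋ : ℤ) : ℝ))) = (w.1 - ⌊w.1⌋, w.2 - ⌊w.2⌋) := by
      simp [Prod.ext_iff, sub_eq_add_neg]
    rw [e1]
    simp [Int.self_sub_floor]
  have hNw : ‖iteratedFDeriv ℝ m f w‖ ≤ B := by
    have h1 := phi_shift hf hper hm w (-⌊w.1⌋) (-⌊w.2⌋)
    rw [hu] at h1
    rw [← h1]
    have hmem : (Int.fract w.1, Int.fract w.2) ∈ Icc ((0 : ℝ), (0 : ℝ)) (1, 1) := by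
      constructor <;> constructor <;> simp [Int.fract_nonneg, (Int.fract_lt_one _).le]
    simpa using hB _ hmem
  calc |iteratedFDeriv ℝ m f w (fun _ => ((0 : ℝ), (1 : ℝ)))|
      ≤ ‖iteratedFDeriv ℝ m f w‖ * ∏ _i : Fin m, ‖((0 : ℝ), (1 : ℝ))‖ :=
        (iteratedFDeriv ℝ m f w).le_opNorm _
    _ ≤ B := by
        have : ‖((0 : ℝ), (1 : ℝ))‖ = 1 := by simp [Prod.norm_def]
        simp [this]; exact hNw

lemma exists_zero_of_periodic {φ ψ : ℝ → ℝ} {c : ℝ} (hc : 0 < c) (hp : Function.Periodic φ c)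
    (hd : ∀ x, HasDerivAt φ (ψ x) x) : ∃ z, ψ z = 0 := by
  have hcont : ContinuousOn φ (Icc 0 c) :=
    (continuous_iff_continuousAt.mpr fun x => (hd x).continuousAt).continuousOn
  have hI : φ 0 = φ c := by simpa using (hp 0).symm
  obtain ⟨z, _, hz⟩ := exists_hasDerivAt_eq_zero hc hcont hI fun x _ => hd x
  exact ⟨z, hz⟩

lemma abs_le_of_periodic {φ ψ : ℝ → ℝ} {c B : ℝ} (hc : 0 < c) (hp : Function.Periodic φ c)
    (hd : ∀ x, HasDerivAt φ (ψ x) x) {z : ℝ} (hz : φ z = 0) (hB : ∀ x, |ψ x| ≤ B) :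
    ∀ x, |φ x| ≤ B * c := by
  have hB0 : 0 ≤ B := le_trans (abs_nonneg _) (hB 0)
  have hlip : ∀ x y : ℝ, |φ x - φ y| ≤ B * |x - y| := fun x y => by
    have := convex_univ.norm_image_sub_le_of_norm_hasDerivWithin_le (f := φ) (f' := ψ)
      (fun u _ => (hd u).hasDerivWithinAt) (fun u _ => by simpa using hB u)
      (mem_univ y) (mem_univ x)
    simpa [Real.norm_eq_abs] using this
  intro x
  set n : ℤ := ⌊(x - z) / c⌋ with hn
  have h1 : φ (x - n * c) = φ x := hp.sub_int_mul_eq n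
  have hfl : (n : ℝ) ≤ (x - z) / c := Int.floor_le _
  have hfl2 : (x - z) / c < n + 1 := Int.lt_floor_add_one _
  have h2 : z ≤ x - n * c := by
    have := mul_le_mul_of_nonneg_right hfl hc.le
    rw [div_mul_cancel₀ _ hc.ne'] at this
    linarith
  have h3 : x - n * c ≤ z + c := by
    have := mul_le_mul_of_nonneg_right hfl2.le hc.le
    rw [div_mul_cancel₀ _ hc.ne'] at this
    linarith
  calc |φ x| = |φ (x - n * c) - φ z| := by rw [h1, hz, sub_zero]
    _ ≤ B * |x - n * c - z| := hlip _ _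
    _ ≤ B * c := by
        apply mul_le_mul_of_nonneg_left _ hB0
        rw [abs_le]; constructor <;> linarith

lemma integral_shift (Φ : ℝ × ℝ → ℝ) (hc : Continuous Φ)
    (hp : ∀ (x y : ℝ) (m n : ℤ), Φ (x + m, y + n) = Φ (x, y))
    (p q T : ℝ) (hT : 0 < T) (a b : ℤ) (ha : a ≠ 0) (hcop : Int.gcd a b = 1)
    (haT : p * T = a) (hbT : q * T = b) (l : ℝ) :
    (∫ t in (0:ℝ)..T, Φ (p * t, q * t + (l + 1 / (a : ℝ))))
      = ∫ t in (0:ℝ)..T, Φ (p * t, q * t + l) := by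
  have haR : (a : ℝ) ≠ 0 := Int.cast_ne_zero.mpr ha
  have hTne : T ≠ 0 := hT.ne'
  obtain ⟨u, v, huv⟩ := Int.isCoprime_iff_gcd_eq_one.mpr hcop
  have huvR : (u : ℝ) * a + (v : ℝ) * b = 1 := by exact_mod_cast congrArg (Int.cast : ℤ → ℝ) huv
  set s : ℝ := (v : ℝ) * T / a with hs
  have hps : p * s = (v : ℝ) := by
    rw [hs]; field_simp; linear_combination (v : ℝ) * haT
  have hqs : q * s = 1 / (a : ℝ) - (u : ℝ) := by
    rw [hs]; field_simp; linear_combination (v : ℝ) * hbT + huvR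
  have per_t : Function.Periodic (fun t => Φ (p * t, q * t + l)) T := by
    intro t
    show Φ (p * (t + T), q * (t + T) + l) = Φ (p * t, q * t + l)
    have e1 : p * (t + T) = p * t + (a : ℝ) := by rw [mul_add, haT]
    have e2 : q * (t + T) + l = (q * t + l) + (b : ℝ) := by rw [mul_add, hbT]; ring
    rw [e1, e2]; exact hp _ _ a b
  have step1 : (∫ t in (0:ℝ)..T, Φ (p * t, q * t + l))
      = ∫ t in s..s + T, Φ (p * t, q * t + l) := by
    have := per_t.intervalIntegral_add_eq 0 s
    rwa [zero_add] at this
  have step2 : (∫ t in s..s + T, Φ (p * t, q * t + l))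
      = ∫ t in (0:ℝ)..T, Φ (p * (t + s), q * (t + s) + l) := by
    have := intervalIntegral.integral_comp_add_right (a := (0:ℝ)) (b := T)
      (fun t => Φ (p * t, q * t + l)) s
    rw [zero_add, add_comm T s] at this
    exact this.symm
  have step3 : ∀ t : ℝ, Φ (p * (t + s), q * (t + s) + l)
      = Φ (p * t, q * t + (l + 1 / (a : ℝ))) := by
    intro t
    have e1 : p * (t + s) = p * t + (v : ℝ) := by rw [mul_add, hps]
    have e2 : q * (t + s) + l = (q * t + (l + 1 / (a : ℝ))) + ((-u : ℤ) : ℝ) := by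
      rw [mul_add, hqs]; push_cast; ring
    rw [e1, e2]; exact hp _ _ v (-u)
  rw [step1, step2]
  exact (intervalIntegral.integral_congr fun t _ => step3 t).symm

lemma hasDeriv_param (Φ Ψ : ℝ × ℝ → ℝ) (hΦc : Continuous Φ) (hΨc : Continuous Ψ) {B : ℝ}
    (hΨb : ∀ w, |Ψ w| ≤ B)
    (hd : ∀ x z : ℝ, HasDerivAt (fun y => Φ (x, y)) (Ψ (x, z)) z)
    (p q T l₀ : ℝ) :
    HasDerivAt (fun l => ∫ t in (0:ℝ)..T, Φ (p * t, q * t + l))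
      (∫ t in (0:ℝ)..T, Ψ (p * t, q * t + l₀)) l₀ := by
  have hinner : ∀ x : ℝ, Continuous fun t : ℝ => ((p * t, q * t + x) : ℝ × ℝ) := by
    intro x; fun_prop
  refine (intervalIntegral.hasDerivAt_integral_of_dominated_loc_of_deriv_le
    (F := fun x t => Φ (p * t, q * t + x)) (F' := fun x t => Ψ (p * t, q * t + x))
    (bound := fun _ => B) Filter.univ_mem
    (Filter.Eventually.of_forall fun x => ((hΦc.comp (hinner x)).aestronglyMeasurable))
    ((hΦc.comp (hinner l₀)).intervalIntegrable 0 T)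
    ((hΨc.comp (hinner l₀)).aestronglyMeasurable)
    (MeasureTheory.ae_of_all _ fun t _ x _ => by
      simpa [Real.norm_eq_abs] using hΨb (p * t, q * t + x))
    (intervalIntegrable_const)
    (MeasureTheory.ae_of_all _ fun t _ x _ => ?_)).2
  simpa [Function.comp_def] using (hd (p * t) (q * t + x)).comp x ((hasDerivAt_id x).const_add (q * t))

lemma analytic_key (f : ℝ × ℝ → ℝ) (hf : ContDiff ℝ 4 f)
    (hper : ∀ (x y : ℝ) (m n : ℤ), f (x + m, y + n) = f (x, y))
    (p q T : ℝ) (hT : 0 < T) (a b : ℤ) (ha : a ≠ 0) (hcop : Int.gcd a b = 1)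
    (haT : p * T = a) (hbT : q * T = b) (F : ℝ → ℝ)
    (hF : ∀ l, F l = (1 / T) * ∫ t in (0:ℝ)..T, f (p * t, q * t + l))
    {C : ℝ} (hC : 0 < C)
    (hcon : ∀ l, |(1 / T) * ∫ t in (0:ℝ)..T,
        iteratedDeriv 4 (fun y => f (p * t, y)) (q * t + l)| < C) :
    (∫ l in (0:ℝ)..1, F l) - F 0 ≤ C * (1 / |(a : ℝ)|) ^ 4 := by
  have haR : (a : ℝ) ≠ 0 := Int.cast_ne_zero.mpr ha
  have haabs : 0 < |(a : ℝ)| := abs_pos.mpr haR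
  set pr : ℝ := 1 / |(a : ℝ)| with hpr
  have hpr0 : 0 < pr := by positivity
  set Φ : ℕ → ℝ × ℝ → ℝ :=
    fun m w => iteratedFDeriv ℝ m f w (fun _ => ((0 : ℝ), (1 : ℝ))) with hΦ
  have hΦc : ∀ m : ℕ, m ≤ 4 → Continuous (Φ m) := by
    intro m hm
    have hm' : (m : WithTop ℕ∞) ≤ 4 := by exact_mod_cast hm
    exact (ContinuousMultilinearMap.apply ℝ (fun _ : Fin m => ℝ × ℝ) ℝ
      (fun _ => ((0 : ℝ), (1 : ℝ)))).continuous.comp (hf.continuous_iteratedFDeriv hm')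
  have hΦp : ∀ m : ℕ, m ≤ 4 → ∀ (x y : ℝ) (mi ni : ℤ),
      Φ m (x + mi, y + ni) = Φ m (x, y) := by
    intro m hm x y mi ni
    have h1 := phi_shift hf hper hm (x, y) mi ni
    have e : ((x, y) : ℝ × ℝ) + ((mi : ℝ), (ni : ℝ)) = (x + mi, y + ni) := rfl
    rw [e] at h1
    simp only [hΦ, h1]
  have hΦb : ∀ m : ℕ, m ≤ 4 → ∃ B, ∀ w, |Φ m w| ≤ B := fun m hm => phi_bound hf hper hm
  have hslice : ∀ m : ℕ, m ≤ 4 → ∀ x z : ℝ,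
      iteratedDeriv m (fun y => f (x, y)) z = Φ m (x, z) :=
    fun m hm x z => slice_eq hf hm x z
  have hd : ∀ k : ℕ, k + 1 ≤ 4 → ∀ x z : ℝ,
      HasDerivAt (fun y => Φ k (x, y)) (Φ (k + 1) (x, z)) z := by
    intro k hk x z
    have hg : ContDiff ℝ 4 (fun y => f (x, y)) := hf.comp (contDiff_const.prodMk contDiff_id)
    have hk4 : (k : WithTop ℕ∞) < 4 := by exact_mod_cast Nat.lt_of_succ_le hk
    have h1 : DifferentiableAt ℝ (iteratedDeriv k (fun y => f (x, y))) z :=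
      (hg.differentiable_iteratedDeriv k hk4).differentiableAt
    have hval : Φ (k + 1) (x, z) = deriv (iteratedDeriv k (fun y => f (x, y))) z := by
      rw [← hslice (k + 1) hk x z, iteratedDeriv_succ]
    have h2 : HasDerivAt (iteratedDeriv k (fun y => f (x, y))) (Φ (k + 1) (x, z)) z := by
      rw [hval]; exact h1.hasDerivAt
    have he : (fun y => Φ k (x, y)) = iteratedDeriv k (fun y => f (x, y)) := by
      funext y; exact (hslice k (Nat.le_of_succ_le hk) x y).symm
    rw [he]; exact h2
  set G : ℕ → ℝ → ℝ := fun k l => (1 / T) * ∫ t in (0:ℝ)..T, Φ k (p * t, q * t + l) with hG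
  have hGder : ∀ k : ℕ, k + 1 ≤ 4 → ∀ l, HasDerivAt (G k) (G (k + 1) l) l := by
    intro k hk l
    obtain ⟨B, hB⟩ := hΦb (k + 1) hk
    exact (hasDeriv_param (Φ k) (Φ (k + 1)) (hΦc k (Nat.le_of_succ_le hk)) (hΦc (k + 1) hk)
      hB (hd k hk) p q T l).const_mul (1 / T)
  have hGper : ∀ k : ℕ, k ≤ 4 → Function.Periodic (G k) pr := by
    intro k hk
    have h1 : Function.Periodic (G k) (1 / (a : ℝ)) := by
      intro l
      show (1 / T) * _ = (1 / T) * _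
      rw [integral_shift (Φ k) (hΦc k hk) (hΦp k hk) p q T hT a b ha hcop haT hbT l]
    rcases abs_cases ((a : ℝ)) with ⟨he, _⟩ | ⟨he, _⟩
    · rwa [hpr, he]
    · rw [hpr, he, div_neg]
      exact h1.neg
  have hcon' : ∀ l, |G 4 l| ≤ C := by
    intro l
    have e : G 4 l = (1 / T) * ∫ t in (0:ℝ)..T,
        iteratedDeriv 4 (fun y => f (p * t, y)) (q * t + l) := by
      simp only [hG]
      congr 1
      exact intervalIntegral.integral_congr fun t _ => (hslice 4 le_rfl (p * t) (q * t + l)).symm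
    rw [e]; exact (hcon l).le
  obtain ⟨z3, hz3⟩ := exists_zero_of_periodic hpr0 (hGper 2 (by norm_num))
    (hGder 2 (by norm_num))
  have h3 : ∀ x, |G 3 x| ≤ C * pr :=
    abs_le_of_periodic hpr0 (hGper 3 (by norm_num)) (hGder 3 (by norm_num)) hz3 hcon'
  obtain ⟨z2, hz2⟩ := exists_zero_of_periodic hpr0 (hGper 1 (by norm_num))
    (hGder 1 (by norm_num))
  have h2 : ∀ x, |G 2 x| ≤ C * pr * pr :=
    abs_le_of_periodic hpr0 (hGper 2 (by norm_num)) (hGder 2 (by norm_num)) hz2 h3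
  obtain ⟨z1, hz1⟩ := exists_zero_of_periodic hpr0 (hGper 0 (by norm_num))
    (hGder 0 (by norm_num))
  have h1 : ∀ x, |G 1 x| ≤ C * pr * pr * pr :=
    abs_le_of_periodic hpr0 (hGper 1 (by norm_num)) (hGder 1 (by norm_num)) hz1 h2
  have h0 : ∀ l, |G 0 l - G 0 0| ≤ (C * pr * pr * pr) * |l - 0| := by
    intro l
    have := convex_univ.norm_image_sub_le_of_norm_hasDerivWithin_le (f := G 0) (f' := G 1)
      (fun u _ => ((hGder 0 (by norm_num)) u).hasDerivWithinAt)
      (fun u _ => by simpa [Real.norm_eq_abs] using h1 u) (mem_univ 0) (mem_univ l)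
    simpa [Real.norm_eq_abs] using this
  have hFG : F = G 0 := by
    funext l
    rw [hF l]
    have hpt : ∀ t : ℝ, f (p * t, q * t + l) = Φ 0 (p * t, q * t + l) := fun t => by
      simp only [hΦ, iteratedFDeriv_zero_apply]
    simp only [hG]
    exact congrArg (fun z => 1 / T * z)
      (intervalIntegral.integral_congr fun t _ => hpt t)
  have hG0cont : Continuous (G 0) :=
    continuous_iff_continuousAt.mpr fun l => ((hGder 0 (by norm_num)) l).continuousAt
  have hint : ∀ t₁ t₂ : ℝ, IntervalIntegrable (G 0) volume t₁ t₂ :=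
    fun t₁ t₂ => hG0cont.intervalIntegrable t₁ t₂
  have habs1 : ((|a| : ℤ) : ℝ) = |(a : ℝ)| := by push_cast; ring
  have hend : (0 : ℝ) + (|a| : ℤ) • pr = 1 := by
    rw [zsmul_eq_mul, habs1, hpr]; field_simp; norm_num
  have hsplit : (∫ l in (0:ℝ)..1, G 0 l) = |(a : ℝ)| * ∫ l in (0:ℝ)..pr, G 0 l := by
    calc (∫ l in (0:ℝ)..1, G 0 l)
        = ∫ l in (0:ℝ)..((0 : ℝ) + (|a| : ℤ) • pr), G 0 l := by rw [hend]
      _ = (|a| : ℤ) • ∫ l in (0:ℝ)..((0 : ℝ) + pr), G 0 l :=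
          (hGper 0 (by norm_num)).intervalIntegral_add_zsmul_eq _ 0 hint
      _ = |(a : ℝ)| * ∫ l in (0:ℝ)..pr, G 0 l := by
          rw [zsmul_eq_mul, habs1, zero_add]
  have hb1 : (∫ l in (0:ℝ)..pr, (G 0 l - G 0 0)) ≤ pr * (C * pr * pr * pr * pr) := by
    have hmono := intervalIntegral.integral_mono_on (μ := volume) (a := (0:ℝ)) (b := pr)
      (f := fun l => G 0 l - G 0 0) (g := fun _ => C * pr * pr * pr * pr) hpr0.le
      ((hG0cont.sub continuous_const).intervalIntegrable 0 pr)
      (intervalIntegrable_const)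
      (fun x hx => by
        show G 0 x - G 0 0 ≤ C * pr * pr * pr * pr
        have hx1 : |x - 0| ≤ pr := by
          rw [sub_zero, abs_of_nonneg hx.1]; exact hx.2
        have hu := (abs_le.mp (h0 x)).2
        have hv : (C * pr * pr * pr) * |x - 0| ≤ (C * pr * pr * pr) * pr :=
          mul_le_mul_of_nonneg_left hx1 (by positivity)
        calc G 0 x - G 0 0 ≤ (C * pr * pr * pr) * |x - 0| := hu
          _ ≤ (C * pr * pr * pr) * pr := hv
          _ = C * pr * pr * pr * pr := by ring)
    calc (∫ l in (0:ℝ)..pr, (G 0 l - G 0 0))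
        ≤ ∫ _l in (0:ℝ)..pr, C * pr * pr * pr * pr := hmono
      _ = pr * (C * pr * pr * pr * pr) := by
          rw [intervalIntegral.integral_const, smul_eq_mul, sub_zero]
  have hsub : (∫ l in (0:ℝ)..pr, (G 0 l - G 0 0))
      = (∫ l in (0:ℝ)..pr, G 0 l) - pr * G 0 0 := by
    rw [intervalIntegral.integral_sub (hint 0 pr) intervalIntegrable_const,
      intervalIntegral.integral_const, smul_eq_mul, sub_zero]
  have hinv : |(a : ℝ)| * pr = 1 := by rw [hpr]; field_simp
  have final : (∫ l in (0:ℝ)..1, G 0 l) - G 0 0 ≤ C * pr ^ 4 := by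
    have e1 : (∫ l in (0:ℝ)..1, G 0 l) - G 0 0
        = |(a : ℝ)| * (∫ l in (0:ℝ)..pr, (G 0 l - G 0 0)) := by
      rw [hsub, hsplit, mul_sub, ← mul_assoc, hinv, one_mul]
    rw [e1]
    calc |(a : ℝ)| * (∫ l in (0:ℝ)..pr, (G 0 l - G 0 0))
        ≤ |(a : ℝ)| * (pr * (C * pr * pr * pr * pr)) :=
          mul_le_mul_of_nonneg_left hb1 (abs_nonneg _)
      _ = (|(a : ℝ)| * pr) * (C * pr * pr * pr * pr) := by ring
      _ = C * pr ^ 4 := by rw [hinv, one_mul]; ring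
  rw [hFG]
  exact final

set_option maxHeartbeats 2000000 in
theorem stmt_14 (p₀ q₀ C₀ : ℝ) (hnorm : p₀ ^ 2 + q₀ ^ 2 = 1) (hq₀ : q₀ ≠ 0)
    (hC₀ : 0 < C₀) (hirr : Irrational (p₀ / q₀))
    (happrox : ∀ a b : ℤ, b ≠ 0 → |p₀ / q₀ - (a : ℝ) / b| ≥ C₀ / (b : ℝ) ^ 2) :
    ∃ C > 0, ∀ (f : ℝ × ℝ → ℝ), ContDiff ℝ 4 f →
      (∀ (x y : ℝ) (m n : ℤ), f (x + m, y + n) = f (x, y)) →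
      ∀ (p q T : ℝ), 0 < T →
      ∀ a b : ℤ, a ≠ 0 → b ≠ 0 → Int.gcd a b = 1 → p * T = a → q * T = b →
      ∀ F : ℝ → ℝ, (∀ l, F l = (1 / T) * ∫ t in (0:ℝ)..T, f (p * t, q * t + l)) →
      (∫ l in (0:ℝ)..1, F l) - F 0
          ≥ (1 / 2) * (p - p₀) ^ 2 + (1 / 2) * (q - q₀) ^ 2 →
      ∃ l : ℝ,
        |(1 / T) * ∫ t in (0:ℝ)..T, iteratedDeriv 4 (fun y => f (p * t, y)) (q * t + l)|
          ≥ C := by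
  have hp₀ : p₀ ≠ 0 := by
    intro h
    exact hirr (by rw [h, zero_div]; exact ⟨0, Rat.cast_zero⟩)
  have hp0abs : 0 < |p₀| := abs_pos.mpr hp₀
  have hq0abs : 0 < |q₀| := abs_pos.mpr hq₀
  have hp2 : (0:ℝ) < p₀ ^ 2 := by
    have := pow_pos hp0abs 2; rwa [sq_abs] at this
  have hq2 : (0:ℝ) < q₀ ^ 2 := by
    have := pow_pos hq0abs 2; rwa [sq_abs] at this
  set M : ℝ := max 1 (2 * |q₀| / |p₀|) with hM
  have hM1 : (1:ℝ) ≤ M := le_max_left _ _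
  have hM0 : (0:ℝ) < M := lt_of_lt_of_le one_pos hM1
  set c₁ : ℝ := q₀ ^ 2 * C₀ ^ 2 / (2 * M ^ 2 * (1 + M ^ 2)) with hc₁
  have hc₁0 : 0 < c₁ := div_pos (mul_pos hq2 (pow_pos hC₀ 2)) (by positivity)
  set C : ℝ := min (c₁ / 2) (p₀ ^ 2 / 32) with hC
  have hCpos : 0 < C := lt_min (by linarith) (by linarith)
  refine ⟨C, hCpos, ?_⟩
  intro f hf hper p q T hT a b ha hb hcop haT hbT F hF hmin
  by_contra hcon
  push_neg at hcon
  have key := analytic_key f hf hper p q T hT a b ha hcop haT hbT F hF hCpos hcon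
  have haR : (a : ℝ) ≠ 0 := Int.cast_ne_zero.mpr ha
  have hbR : (b : ℝ) ≠ 0 := Int.cast_ne_zero.mpr hb
  have haabs : (1:ℝ) ≤ |(a : ℝ)| := by
    have : (1:ℤ) ≤ |a| := Int.one_le_abs ha
    calc (1:ℝ) = ((1:ℤ):ℝ) := by norm_num
      _ ≤ ((|a| : ℤ) : ℝ) := by exact_mod_cast this
      _ = |(a : ℝ)| := by push_cast; ring
  have habs4 : |(a : ℝ)| ^ 4 = (a : ℝ) ^ 4 := by
    rw [show (4:ℕ) = 2 * 2 from rfl, pow_mul, pow_mul, sq_abs]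
  have ha2 : (0:ℝ) < (a : ℝ) ^ 2 := by positivity
  have hb2 : (0:ℝ) < (b : ℝ) ^ 2 := by positivity
  have ha4 : (0:ℝ) < (a : ℝ) ^ 4 := by positivity
  have ha41 : (1:ℝ) ≤ (a : ℝ) ^ 4 := by
    calc (1:ℝ) = 1 ^ 4 := by norm_num
      _ ≤ |(a : ℝ)| ^ 4 := by
          apply pow_le_pow_left₀ (by norm_num) haabs
      _ = (a : ℝ) ^ 4 := habs4
  have hineq : (1 / 2) * (p - p₀) ^ 2 + (1 / 2) * (q - q₀) ^ 2 ≤ C * (1 / |(a : ℝ)|) ^ 4 :=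
    le_trans hmin key
  have hsum : ((p - p₀) ^ 2 + (q - q₀) ^ 2) * (a : ℝ) ^ 4 ≤ 2 * C := by
    have hmul := mul_le_mul_of_nonneg_right hineq ha4.le
    have e : C * (1 / |(a : ℝ)|) ^ 4 * (a : ℝ) ^ 4 = C := by
      rw [div_pow, one_pow, habs4]; field_simp
    rw [e] at hmul
    linarith only [hmul]
  have hTne : T ≠ 0 := ne_of_gt hT
  have hpb : p * (b : ℝ) = q * (a : ℝ) := by
    have h1 : (p * (b : ℝ) - q * (a : ℝ)) * T = 0 := by
      linear_combination (b : ℝ) * haT - (a : ℝ) * hbT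
    rcases mul_eq_zero.mp h1 with h2 | h2
    · linarith [sub_eq_zero.mp h2]
    · exact absurd h2 hTne
  set D : ℝ := p₀ * (b : ℝ) - q₀ * (a : ℝ) with hD
  have hid : D = (q - q₀) * (a : ℝ) - (p - p₀) * (b : ℝ) := by
    rw [hD]; linear_combination hpb
  have hCS : D ^ 2 ≤ ((p - p₀) ^ 2 + (q - q₀) ^ 2) * ((a : ℝ) ^ 2 + (b : ℝ) ^ 2) := by
    rw [hid]
    have hr : ((p - p₀) ^ 2 + (q - q₀) ^ 2) * ((a : ℝ) ^ 2 + (b : ℝ) ^ 2)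
        - ((q - q₀) * (a : ℝ) - (p - p₀) * (b : ℝ)) ^ 2
        = ((p - p₀) * (a : ℝ) + (q - q₀) * (b : ℝ)) ^ 2 := by ring
    linarith [sq_nonneg ((p - p₀) * (a : ℝ) + (q - q₀) * (b : ℝ)), hr]
  have hD2a4 : D ^ 2 * (a : ℝ) ^ 4 ≤ 2 * C * ((a : ℝ) ^ 2 + (b : ℝ) ^ 2) := by
    have t1 : D ^ 2 * (a : ℝ) ^ 4
        ≤ ((p - p₀) ^ 2 + (q - q₀) ^ 2) * ((a : ℝ) ^ 2 + (b : ℝ) ^ 2) * (a : ℝ) ^ 4 :=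
      mul_le_mul_of_nonneg_right hCS ha4.le
    have t2 : ((p - p₀) ^ 2 + (q - q₀) ^ 2) * (a : ℝ) ^ 4 * ((a : ℝ) ^ 2 + (b : ℝ) ^ 2)
        ≤ 2 * C * ((a : ℝ) ^ 2 + (b : ℝ) ^ 2) :=
      mul_le_mul_of_nonneg_right hsum (by positivity)
    calc D ^ 2 * (a : ℝ) ^ 4
        ≤ ((p - p₀) ^ 2 + (q - q₀) ^ 2) * ((a : ℝ) ^ 2 + (b : ℝ) ^ 2) * (a : ℝ) ^ 4 := t1
      _ = ((p - p₀) ^ 2 + (q - q₀) ^ 2) * (a : ℝ) ^ 4 * ((a : ℝ) ^ 2 + (b : ℝ) ^ 2) := by ring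
      _ ≤ 2 * C * ((a : ℝ) ^ 2 + (b : ℝ) ^ 2) := t2
  rcases le_or_gt |(b : ℝ)| (M * |(a : ℝ)|) with hcase | hcase
  · -- |b| ≤ M |a|
    have hb2M : (b : ℝ) ^ 2 ≤ M ^ 2 * (a : ℝ) ^ 2 := by
      have h := mul_self_le_mul_self (abs_nonneg (b : ℝ)) hcase
      calc (b : ℝ) ^ 2 = |(b : ℝ)| * |(b : ℝ)| := by rw [abs_mul_abs_self]; ring
        _ ≤ (M * |(a : ℝ)|) * (M * |(a : ℝ)|) := h
        _ = M ^ 2 * |(a : ℝ)| ^ 2 := by ring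
        _ = M ^ 2 * (a : ℝ) ^ 2 := by rw [sq_abs]
    have happ := happrox a b hb
    have hid2 : q₀ * (b : ℝ) * (p₀ / q₀ - (a : ℝ) / (b : ℝ)) = D := by
      rw [hD]; field_simp
    have hDsq : D ^ 2 = q₀ ^ 2 * (b : ℝ) ^ 2 * (p₀ / q₀ - (a : ℝ) / (b : ℝ)) ^ 2 := by
      rw [← hid2]; ring
    have hd1 : C₀ ≤ |p₀ / q₀ - (a : ℝ) / (b : ℝ)| * (b : ℝ) ^ 2 := by
      have := mul_le_mul_of_nonneg_right happ hb2.le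
      rwa [div_mul_cancel₀ _ hb2.ne'] at this
    have hd2 : C₀ ^ 2 ≤ (p₀ / q₀ - (a : ℝ) / (b : ℝ)) ^ 2 * (b : ℝ) ^ 4 := by
      have h0 := mul_self_le_mul_self hC₀.le hd1
      have e : (|p₀ / q₀ - (a : ℝ) / (b : ℝ)| * (b : ℝ) ^ 2)
          * (|p₀ / q₀ - (a : ℝ) / (b : ℝ)| * (b : ℝ) ^ 2)
          = (p₀ / q₀ - (a : ℝ) / (b : ℝ)) ^ 2 * (b : ℝ) ^ 4 := by
        rw [show (|p₀ / q₀ - (a : ℝ) / (b : ℝ)| * (b : ℝ) ^ 2)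
          * (|p₀ / q₀ - (a : ℝ) / (b : ℝ)| * (b : ℝ) ^ 2)
          = |p₀ / q₀ - (a : ℝ) / (b : ℝ)| ^ 2 * ((b : ℝ) ^ 2 * (b : ℝ) ^ 2) from by ring,
          sq_abs]
        ring
      rw [← e]
      calc C₀ ^ 2 = C₀ * C₀ := sq C₀
        _ ≤ _ := h0
    have hDlow2 : q₀ ^ 2 * C₀ ^ 2 ≤ D ^ 2 * (b : ℝ) ^ 2 := by
      have h1 := mul_le_mul_of_nonneg_left hd2 (sq_nonneg q₀)
      calc q₀ ^ 2 * C₀ ^ 2 ≤ q₀ ^ 2 * ((p₀ / q₀ - (a : ℝ) / (b : ℝ)) ^ 2 * (b : ℝ) ^ 4) := h1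
        _ = (q₀ ^ 2 * (b : ℝ) ^ 2 * (p₀ / q₀ - (a : ℝ) / (b : ℝ)) ^ 2) * (b : ℝ) ^ 2 := by ring
        _ = D ^ 2 * (b : ℝ) ^ 2 := by rw [← hDsq]
    have hab : (a : ℝ) ^ 2 + (b : ℝ) ^ 2 ≤ (1 + M ^ 2) * (a : ℝ) ^ 2 := by
      linarith only [hb2M]
    have h2 : q₀ ^ 2 * C₀ ^ 2 * (a : ℝ) ^ 4
        ≤ 2 * C * M ^ 2 * (1 + M ^ 2) * (a : ℝ) ^ 4 := by
      calc q₀ ^ 2 * C₀ ^ 2 * (a : ℝ) ^ 4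
          ≤ D ^ 2 * (b : ℝ) ^ 2 * (a : ℝ) ^ 4 :=
            mul_le_mul_of_nonneg_right hDlow2 ha4.le
        _ = D ^ 2 * (a : ℝ) ^ 4 * (b : ℝ) ^ 2 := by ring
        _ ≤ 2 * C * ((a : ℝ) ^ 2 + (b : ℝ) ^ 2) * (b : ℝ) ^ 2 :=
            mul_le_mul_of_nonneg_right hD2a4 hb2.le
        _ ≤ (2 * C * ((1 + M ^ 2) * (a : ℝ) ^ 2)) * (M ^ 2 * (a : ℝ) ^ 2) := by
            apply mul_le_mul _ hb2M hb2.le (by positivity)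
            exact mul_le_mul_of_nonneg_left hab (by positivity)
        _ = 2 * C * M ^ 2 * (1 + M ^ 2) * (a : ℝ) ^ 4 := by ring
    have h5 : q₀ ^ 2 * C₀ ^ 2 ≤ 2 * C * M ^ 2 * (1 + M ^ 2) :=
      le_of_mul_le_mul_right h2 ha4
    have h6 : C ≤ c₁ / 2 := min_le_left _ _
    have h7 : (0:ℝ) < 2 * M ^ 2 * (1 + M ^ 2) := by positivity
    have hc₁e : c₁ * (2 * M ^ 2 * (1 + M ^ 2)) = q₀ ^ 2 * C₀ ^ 2 := by
      rw [hc₁]; field_simp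
    have h9 : C * (2 * M ^ 2 * (1 + M ^ 2)) ≤ (c₁ / 2) * (2 * M ^ 2 * (1 + M ^ 2)) :=
      mul_le_mul_of_nonneg_right h6 h7.le
    have h10 : q₀ ^ 2 * C₀ ^ 2 ≤ q₀ ^ 2 * C₀ ^ 2 / 2 := by
      calc q₀ ^ 2 * C₀ ^ 2 ≤ 2 * C * M ^ 2 * (1 + M ^ 2) := h5
        _ = C * (2 * M ^ 2 * (1 + M ^ 2)) := by ring
        _ ≤ (c₁ / 2) * (2 * M ^ 2 * (1 + M ^ 2)) := h9
        _ = c₁ * (2 * M ^ 2 * (1 + M ^ 2)) / 2 := by ring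
        _ = q₀ ^ 2 * C₀ ^ 2 / 2 := by rw [hc₁e]
    linarith only [h10, mul_pos hq2 (pow_pos hC₀ 2)]
  · -- |b| > M |a|
    have hba : |(a : ℝ)| ≤ |(b : ℝ)| := by
      have h := mul_le_mul_of_nonneg_right hM1 (abs_nonneg (a : ℝ))
      rw [one_mul] at h
      linarith only [h, hcase]
    have hba2 : (a : ℝ) ^ 2 ≤ (b : ℝ) ^ 2 := by
      have h := mul_self_le_mul_self (abs_nonneg (a:ℝ)) hba
      linarith only [h, sq_abs (a : ℝ), sq_abs (b : ℝ),
        show |(a:ℝ)| * |(a:ℝ)| = |(a:ℝ)|^2 from by ring,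
        show |(b:ℝ)| * |(b:ℝ)| = |(b:ℝ)|^2 from by ring]
    have hMq : 2 * |q₀| ≤ M * |p₀| := by
      have := le_max_right 1 (2 * |q₀| / |p₀|)
      rw [← hM] at this
      exact (div_le_iff₀ hp0abs).mp this
    have hq0a : 2 * (|q₀| * |(a : ℝ)|) ≤ |p₀| * |(b : ℝ)| := by
      have t1 := mul_le_mul_of_nonneg_right hMq (abs_nonneg (a : ℝ))
      have t2 := mul_le_mul_of_nonneg_left hcase.le hp0abs.le
      calc 2 * (|q₀| * |(a : ℝ)|) = 2 * |q₀| * |(a : ℝ)| := by ring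
        _ ≤ M * |p₀| * |(a : ℝ)| := t1
        _ = |p₀| * (M * |(a : ℝ)|) := by ring
        _ ≤ |p₀| * |(b : ℝ)| := t2
    have hDlow : |p₀| * |(b : ℝ)| / 2 ≤ |D| := by
      have h1 := abs_sub_abs_le_abs_sub (p₀ * (b : ℝ)) (q₀ * (a : ℝ))
      rw [abs_mul, abs_mul, ← hD] at h1
      linarith [hq0a]
    have hD2low : p₀ ^ 2 * (b : ℝ) ^ 2 / 4 ≤ D ^ 2 := by
      have h := mul_self_le_mul_self (by positivity) hDlow
      have e1 : (|p₀| * |(b : ℝ)| / 2) * (|p₀| * |(b : ℝ)| / 2) = p₀ ^ 2 * (b : ℝ) ^ 2 / 4 := by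
        rw [show (|p₀| * |(b : ℝ)| / 2) * (|p₀| * |(b : ℝ)| / 2)
          = |p₀| ^ 2 * |(b : ℝ)| ^ 2 / 4 from by ring, sq_abs, sq_abs]
      have e2 : |D| * |D| = D ^ 2 := by rw [abs_mul_abs_self]; ring
      rw [← e1, ← e2]; exact h
    have hup : D ^ 2 ≤ 4 * C * (b : ℝ) ^ 2 := by
      have h1 : D ^ 2 ≤ D ^ 2 * (a : ℝ) ^ 4 := le_mul_of_one_le_right (sq_nonneg D) ha41
      have h2' : 2 * C * ((a : ℝ) ^ 2 + (b : ℝ) ^ 2) ≤ 2 * C * ((b : ℝ) ^ 2 + (b : ℝ) ^ 2) :=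
        mul_le_mul_of_nonneg_left (by linarith) (by positivity)
      calc D ^ 2 ≤ D ^ 2 * (a : ℝ) ^ 4 := h1
        _ ≤ 2 * C * ((a : ℝ) ^ 2 + (b : ℝ) ^ 2) := hD2a4
        _ ≤ 2 * C * ((b : ℝ) ^ 2 + (b : ℝ) ^ 2) := h2'
        _ = 4 * C * (b : ℝ) ^ 2 := by ring
    have h16 : p₀ ^ 2 / 4 ≤ 4 * C := by
      have h1 : p₀ ^ 2 / 4 * (b : ℝ) ^ 2 ≤ 4 * C * (b : ℝ) ^ 2 := by
        calc p₀ ^ 2 / 4 * (b : ℝ) ^ 2 = p₀ ^ 2 * (b : ℝ) ^ 2 / 4 := by ring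
          _ ≤ D ^ 2 := hD2low
          _ ≤ 4 * C * (b : ℝ) ^ 2 := hup
      exact le_of_mul_le_mul_right h1 hb2
    have h6 : C ≤ p₀ ^ 2 / 32 := min_le_right _ _
    linarith only [h6, h16, hp2]
end

section
/- Let p, q be reals with p ≠ 0, T > 0, pT and qT integers with pT·r − qT·s = 1 for some integers r, s. Then for all real t, the point (pt, qt + 1/(pT)) is congruent modulo ℤ² to (p(t − s/p), q(t − s/p)). -/
theorem stmt_16 (p q T : ℝ) (hT : 0 < T) (hp : p ≠ 0)
    (a b r s : ℤ) (ha : p * T = a) (hb : q * T = b)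
    (hbezout : (a : ℝ) * r - (b : ℝ) * s = 1) (t : ℝ) :
    ∃ m n : ℤ, p * t - p * (t - s / p) = m ∧
      (q * t + 1 / (p * T)) - q * (t - s / p) = n := by
  have hT0 : T ≠ 0 := hT.ne'
  refine ⟨s, r, by field_simp; ring, ?_⟩
  field_simp
  linear_combination (-1 : ℝ) * hbezout + (s : ℝ) * hb + (-(r : ℝ)) * ha
end
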